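/- For every hypergraph H = (V, E) and every edge-dominated polymatroid h on V, one has h(V) ≤ ρ*(H), the fractional edge cover number of H. -/

import Mathlib

open Finset

/-- A polymatroid on a finite vertex type `V`: nonnegative, zero on `∅`,
monotone and submodular. -/
def IsPolymatroid {V : Type*} [DecidableEq V] [Fintype V] (h : Finset V → ℝ) : Prop :=
  h ∅ = 0 ∧ (∀ A : Finset V, 0 ≤ h A) ∧
    (∀ A B : Finset V, A ⊆ B → h A ≤ h B) ∧
    (∀ A B : Finset V, h (A ∪ B) + h (A ∩ B) ≤ h A + h B)

/-- `h` is edge-dominated w.r.t. the hyperedge set `E`. -/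
def EdgeDominated {V : Type*} [DecidableEq V] [Fintype V]
    (E : Finset (Finset V)) (h : Finset V → ℝ) : Prop :=
  ∀ e ∈ E, h e ≤ 1

/-- `W` is a fractional edge cover of the hypergraph with hyperedges `E`. -/
def IsFracEdgeCover {V : Type*} [DecidableEq V] [Fintype V]
    (E : Finset (Finset V)) (W : Finset V → ℝ) : Prop :=
  (∀ e ∈ E, 0 ≤ W e ∧ W e ≤ 1) ∧
    ∀ v : V, 1 ≤ ∑ e ∈ E.filter (fun e => v ∈ e), W e

/-- The fractional edge cover number `ρ*` of the hypergraph with hyperedges `E`. -/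
noncomputable def fracCoverNumber {V : Type*} [DecidableEq V] [Fintype V]
    (E : Finset (Finset V)) : ℝ :=
  sInf {s : ℝ | ∃ W : Finset V → ℝ, IsFracEdgeCover E W ∧ s = ∑ e ∈ E, W e}

/-- for every hypergraph `H = (V, E)` (every vertex lying in some
hyperedge) and every edge-dominated polymatroid `h` on `V`,
`h(V) ≤ ρ*(H)`. -/
theorem polymatroid_key {V : Type*} [DecidableEq V] [Fintype V]
    (E : Finset (Finset V)) (W : Finset V → ℝ) (hW : IsFracEdgeCover E W)
    (h : Finset V → ℝ) (hpoly : IsPolymatroid h) :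
    ∀ S : Finset V, h S ≤ ∑ e ∈ E, W e * h (e ∩ S) := by
  obtain ⟨h0, hnn, hmono, hsub⟩ := hpoly
  intro S
  induction S using Finset.induction_on with
  | empty => simp [h0]
  | @insert v S' hv ih =>
    have hWnn : ∀ e ∈ E, 0 ≤ W e := fun e he => (hW.1 e he).1
    have hd : 0 ≤ h (insert v S') - h S' := by
      have := hmono S' (insert v S') (Finset.subset_insert v S')
      linarith
    have h1 : ∀ e ∈ E.filter (fun e => v ∈ e),
        h (insert v S') - h S' ≤ h (e ∩ insert v S') - h (e ∩ S') := by
      intro e he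
      rw [Finset.mem_filter] at he
      have hsubm := hsub S' (insert v (e ∩ S'))
      have hu : S' ∪ insert v (e ∩ S') = insert v S' := by
        ext x
        simp only [Finset.mem_union, Finset.mem_insert, Finset.mem_inter]
        tauto
      have hi : S' ∩ insert v (e ∩ S') = e ∩ S' := by
        ext x
        simp only [Finset.mem_inter, Finset.mem_insert]
        constructor
        · rintro ⟨hx, rfl | ⟨he', hx'⟩⟩
          · exact absurd hx hv
          · exact ⟨he', hx'⟩
        · rintro ⟨he', hx⟩
          exact ⟨hx, Or.inr ⟨he', hx⟩⟩
      have he2 : e ∩ insert v S' = insert v (e ∩ S') := by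
        ext x
        simp only [Finset.mem_inter, Finset.mem_insert]
        constructor
        · rintro ⟨hxe, rfl | hx⟩
          · exact Or.inl rfl
          · exact Or.inr ⟨hxe, hx⟩
        · rintro (rfl | ⟨hxe, hx⟩)
          · exact ⟨he.2, Or.inl rfl⟩
          · exact ⟨hxe, Or.inr hx⟩
      rw [hu, hi] at hsubm
      rw [he2]
      linarith
    have cover := hW.2 v
    have key2 : (∑ e ∈ E.filter (fun e => v ∈ e), W e * (h (e ∩ insert v S') - h (e ∩ S')))
        = ∑ e ∈ E, (W e * h (e ∩ insert v S') - W e * h (e ∩ S')) := by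
      rw [Finset.sum_filter]
      refine Finset.sum_congr rfl fun e he => ?_
      by_cases hve : v ∈ e
      · simp [hve]; ring
      · have : e ∩ insert v S' = e ∩ S' := by
          ext x
          simp only [Finset.mem_inter, Finset.mem_insert]
          constructor
          · rintro ⟨hxe, rfl | hx⟩
            · exact absurd hxe hve
            · exact ⟨hxe, hx⟩
          · rintro ⟨hxe, hx⟩
            exact ⟨hxe, Or.inr hx⟩
        simp [hve, this]
    calc h (insert v S')
        = h S' + (h (insert v S') - h S') := by ring
      _ ≤ (∑ e ∈ E, W e * h (e ∩ S')) + 1 * (h (insert v S') - h S') := by linarith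
      _ ≤ (∑ e ∈ E, W e * h (e ∩ S'))
            + (∑ e ∈ E.filter (fun e => v ∈ e), W e) * (h (insert v S') - h S') := by
          have := mul_le_mul_of_nonneg_right cover hd
          linarith
      _ = (∑ e ∈ E, W e * h (e ∩ S'))
            + ∑ e ∈ E.filter (fun e => v ∈ e), W e * (h (insert v S') - h S') := by
          rw [Finset.sum_mul]
      _ ≤ (∑ e ∈ E, W e * h (e ∩ S'))
            + ∑ e ∈ E.filter (fun e => v ∈ e), W e * (h (e ∩ insert v S') - h (e ∩ S')) := by
          apply add_le_add le_rfl
          refine Finset.sum_le_sum fun e he => ?_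
          exact mul_le_mul_of_nonneg_left (h1 e he)
            (hWnn e (Finset.mem_of_mem_filter e he))
      _ = ∑ e ∈ E, W e * h (e ∩ insert v S') := by
          rw [key2, Finset.sum_sub_distrib]
          ring


theorem polymatroid_le_fracCoverNumber {V : Type*} [DecidableEq V] [Fintype V]
    (E : Finset (Finset V)) (hcov : ∀ v : V, ∃ e ∈ E, v ∈ e)
    (h : Finset V → ℝ) (hpoly : IsPolymatroid h) (hED : EdgeDominated E h) :
    h Finset.univ ≤ fracCoverNumber E := by
  apply le_csInf
  · refine ⟨∑ e ∈ E, (1 : ℝ), fun _ => 1, ⟨fun e _ => ⟨zero_le_one, le_refl 1⟩, fun v => ?_⟩, rfl⟩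
    obtain ⟨e, he, hve⟩ := hcov v
    have hne : (E.filter (fun e => v ∈ e)).Nonempty := ⟨e, Finset.mem_filter.2 ⟨he, hve⟩⟩
    rw [Finset.sum_const, nsmul_eq_mul, mul_one]
    exact_mod_cast Nat.one_le_iff_ne_zero.2 (Finset.card_ne_zero_of_mem hne.choose_spec)
  · rintro s ⟨W, hW, rfl⟩
    have key := polymatroid_key E W hW h hpoly Finset.univ
    refine key.trans (Finset.sum_le_sum fun e he => ?_)
    have h1 : h (e ∩ Finset.univ) ≤ 1 := by
      rw [Finset.inter_univ]; exact hED e he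
    have h2 : 0 ≤ W e := (hW.1 e he).1
    calc W e * h (e ∩ Finset.univ) ≤ W e * 1 := mul_le_mul_of_nonneg_left h1 h2
      _ = W e := mul_one _
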